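/- Assume K has characteristic 0. Then every simple semilinear representation V of H over K satisfies dim_K V = 1, and there is a character χ ∈ Hom(H′, K×) such that h′•v = χ(h′)·v for all h′ ∈ H′ and v ∈ V. -/

import Mathlib

/-- A semilinear representation of `H` over `K`: a `K`-vector space `V` with an
action of `H` by additive automorphisms such that `h • (c • v) = (h • c) • (h • v)`. -/
structure SemilinearRep (K H : Type) [Field K] [Group H] [MulSemiringAction H K] where
  carrier : Type
  [isAddCommGroup : AddCommGroup carrier]
  [isModule : Module K carrier]
  [isDistribMulAction : DistribMulAction H carrier]
  semilinear : ∀ (h : H) (c : K) (v : carrier), h • (c • v) = (h • c) • (h • v)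

attribute [instance] SemilinearRep.isAddCommGroup SemilinearRep.isModule
  SemilinearRep.isDistribMulAction

variable {K H : Type} [Field K] [Group H] [MulSemiringAction H K]

/-- An `H`-invariant `K`-subspace (a subrepresentation). -/
def SemilinearRep.IsSubrep (V : SemilinearRep K H) (W : Submodule K V.carrier) : Prop :=
  ∀ (h : H), ∀ w ∈ W, h • w ∈ W

/-- A semilinear representation is simple if it is nonzero and its only
subrepresentations are `⊥` and `⊤`. -/
def SemilinearRep.IsSimple (V : SemilinearRep K H) : Prop :=
  Nontrivial V.carrier ∧
    ∀ W : Submodule K V.carrier, V.IsSubrep W → W = ⊥ ∨ W = ⊤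

/-- Two semilinear representations are isomorphic if there is a bijective
`K`-linear `H`-equivariant map between them. -/
def SemilinearRep.Iso (V W : SemilinearRep K H) : Prop :=
  ∃ e : V.carrier ≃ₗ[K] W.carrier, ∀ (h : H) (v : V.carrier), e (h • v) = h • e v

/-- The kernel `H′` of the action of `H` on `K`. -/
def kerAct (K H : Type) [Field K] [Group H] [MulSemiringAction H K] : Subgroup H where
  carrier := {h : H | ∀ c : K, h • c = c}
  one_mem' := fun c => one_smul H c
  mul_mem' := by
    intro a b ha hb c
    simp only [Set.mem_setOf_eq] at *
    rw [mul_smul, hb, ha]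
  inv_mem' := by
    intro a ha c
    simp only [Set.mem_setOf_eq] at *
    conv_lhs => rw [← ha c]
    rw [inv_smul_smul]

section Aux

open Polynomial Module

lemma aux_splits {K : Type} [Field K] {e : ℕ} {ζ : K} (hζ : IsPrimitiveRoot ζ e) :
    ((X : K[X]) ^ e - 1).Splits := by
  rw [Polynomial.splits_iff_card_roots]
  have h1 : ((X : K[X]) ^ e - 1) = ((X : K[X]) ^ e - C 1) := by rw [Polynomial.C_1]
  rw [h1]
  have h2 : ((X : K[X]) ^ e - C 1).roots = Polynomial.nthRoots e (1 : K) := rfl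
  rw [h2, hζ.card_nthRoots_one, Polynomial.natDegree_X_pow_sub_C]

lemma aux_eigenvector_in {K V : Type} [Field K] [AddCommGroup V] [Module K V]
    [FiniteDimensional K V] {e : ℕ} (he : 0 < e) {ζ : K} (hζ : IsPrimitiveRoot ζ e)
    (f : Module.End K V) (hf : f ^ e = 1)
    (W : Submodule K V) (hW : W ≠ ⊥) (hfW : ∀ w ∈ W, f w ∈ W) :
    ∃ μ : K, ∃ u ∈ W, u ≠ 0 ∧ f u = μ • u := by
  haveI : Nontrivial ↥W := Submodule.nontrivial_iff_ne_bot.mpr hW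
  set g : Module.End K ↥W := f.restrict hfW with hgdef
  have hge : g ^ e = 1 := by
    rw [hgdef, Module.End.pow_restrict]
    ext w
    simp [hf]
  have hmonic : ((X : K[X]) ^ e - 1).Monic := by
    have := Polynomial.monic_X_pow_sub_C (1 : K) he.ne'
    rwa [Polynomial.C_1] at this
  have haev : Polynomial.aeval g ((X : K[X]) ^ e - 1) = 0 := by
    simp [map_sub, map_pow, hge]
  have hint : IsIntegral K g := ⟨(X : K[X]) ^ e - 1, hmonic, haev⟩
  have hmp : minpoly K g ∣ (X : K[X]) ^ e - 1 := minpoly.dvd K g haev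
  have hsp : (minpoly K g).Splits :=
    Polynomial.Splits.of_dvd (aux_splits hζ) hmonic.ne_zero hmp
  have hdeg : (minpoly K g).degree ≠ 0 :=
    (Polynomial.natDegree_pos_iff_degree_pos.mp (minpoly.natDegree_pos hint)).ne'
  obtain ⟨μ, hμ⟩ := Polynomial.Splits.exists_eval_eq_zero hsp hdeg
  have hev : g.HasEigenvalue μ := Module.End.hasEigenvalue_of_isRoot (by
    simpa [Polynomial.IsRoot] using hμ)
  obtain ⟨w, hw⟩ := hev.exists_hasEigenvector
  have hwe : g w = μ • w := Module.End.mem_eigenspace_iff.mp hw.1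
  refine ⟨μ, ↑w, w.2, ?_, ?_⟩
  · simpa [Submodule.coe_eq_zero] using hw.2
  · have h3 : f ↑w = ↑(g w) := (LinearMap.restrict_coe_apply f hfW w).symm
    rw [h3, hwe, Submodule.coe_smul]

lemma aux_common_eigenvector {K V : Type} [Field K] [AddCommGroup V] [Module K V]
    [FiniteDimensional K V] [Nontrivial V] {e : ℕ} (he : 0 < e) {ζ : K} (hζ : IsPrimitiveRoot ζ e)
    (S : Set (Module.End K V)) (hcomm : ∀ f ∈ S, ∀ g ∈ S, f * g = g * f)
    (hpow : ∀ f ∈ S, f ^ e = 1) :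
    ∃ v : V, v ≠ 0 ∧ ∀ f ∈ S, ∃ c : K, f v = c • v := by
  suffices h : ∀ n (W : Submodule K V), Module.finrank K ↥W = n → W ≠ ⊥ →
      (∀ f ∈ S, ∀ w ∈ W, f w ∈ W) →
      ∃ v, v ∈ W ∧ v ≠ 0 ∧ ∀ f ∈ S, ∃ c : K, f v = c • v by
    obtain ⟨x, hx⟩ := exists_ne (0 : V)
    obtain ⟨v, _, hv0, hv⟩ := h _ ⊤ rfl
      (Submodule.ne_bot_iff _ |>.mpr ⟨x, Submodule.mem_top, hx⟩)
      (fun f _ w _ => Submodule.mem_top)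
    exact ⟨v, hv0, hv⟩
  intro n
  induction n using Nat.strong_induction_on with
  | _ n ih =>
    intro W hWn hW hWinv
    by_cases hall : ∀ f ∈ S, ∃ c : K, ∀ w ∈ W, f w = c • w
    · obtain ⟨v, hvW, hv0⟩ := Submodule.ne_bot_iff W |>.mp hW
      exact ⟨v, hvW, hv0, fun f hf => (hall f hf).imp fun c hc => hc v hvW⟩
    · push_neg at hall
      obtain ⟨f, hfS, hfns⟩ := hall
      obtain ⟨μ, u, huW, hu0, hfu⟩ := aux_eigenvector_in he hζ f (hpow f hfS) W hW (hWinv f hfS)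
      set W' := W ⊓ LinearMap.ker (f - μ • (1 : Module.End K V)) with hW'def
      have hmem : ∀ x, x ∈ W' ↔ x ∈ W ∧ f x = μ • x := by
        intro x
        simp [hW'def, Submodule.mem_inf, LinearMap.mem_ker, LinearMap.sub_apply, sub_eq_zero,
          LinearMap.smul_apply, Module.End.one_apply]
      have hW'bot : W' ≠ ⊥ := Submodule.ne_bot_iff W' |>.mpr ⟨u, (hmem u).mpr ⟨huW, hfu⟩, hu0⟩
      have hW'inv : ∀ g ∈ S, ∀ w ∈ W', g w ∈ W' := by
        intro g hg w hw
        rw [hmem] at hw ⊢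
        refine ⟨hWinv g hg w hw.1, ?_⟩
        have hc : f (g w) = g (f w) := by
          rw [← Module.End.mul_apply, ← Module.End.mul_apply, hcomm f hfS g hg]
        rw [hc, hw.2, map_smul]
      have hlt : W' < W := lt_of_le_of_ne inf_le_left (by
        intro hEq
        obtain ⟨w, hwW, hne⟩ := hfns μ
        exact hne ((hmem w).mp (hEq ▸ hwW)).2)
      subst hWn
      obtain ⟨v, hvW', rest⟩ := ih _ (Submodule.finrank_lt_finrank_of_lt hlt) W' rfl hW'bot hW'inv
      exact ⟨v, hlt.le hvW', rest⟩

end Aux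

/-- in characteristic 0, every simple semilinear representation of `H`
over `K` is one-dimensional, and `H′` acts on it by a character. -/
theorem simple_semilinear_rep_one_dim [CharZero K] [Finite H]
    (e m : ℕ)
    (hcomm : ∀ a b : ↥(kerAct K H), a * b = b * a)
    (hexp : Monoid.exponent ↥(kerAct K H) = e)
    (hroot : ∃ ζ : K, IsPrimitiveRoot ζ e)
    (χs : Fin m → (↥(kerAct K H) →* Kˣ))
    (hgen : Subgroup.closure (Set.range χs) = ⊤)
    (Vs : Fin m → SemilinearRep K H)
    (hVsdim : ∀ i, Module.finrank K (Vs i).carrier = 1)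
    (hVsact : ∀ (i : Fin m) (h' : ↥(kerAct K H)) (v : (Vs i).carrier),
      (h' : H) • v = ((χs i h' : Kˣ) : K) • v)
    (V : SemilinearRep K H) (hV : V.IsSimple) :
    Module.finrank K V.carrier = 1 ∧
      ∃ χ : ↥(kerAct K H) →* Kˣ,
        ∀ (h' : ↥(kerAct K H)) (v : V.carrier), (h' : H) • v = ((χ h' : Kˣ) : K) • v := by
  classical
  obtain ⟨ζ, hζ⟩ := hroot
  have he : 0 < e := by
    rw [← hexp]
    exact Nat.pos_of_ne_zero Monoid.exponent_ne_zero_of_finite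
  haveI : Nontrivial V.carrier := hV.1
  haveI : Fintype H := Fintype.ofFinite H
  have hker : ∀ (h' : ↥(kerAct K H)) (a : K), (h' : H) • a = a := fun h' a => h'.2 a
  -- V is finite-dimensional
  obtain ⟨v1, hv1⟩ := exists_ne (0 : V.carrier)
  have hspan : Submodule.span K (Set.range fun h : H => h • v1) = ⊤ := by
    have hsub : V.IsSubrep (Submodule.span K (Set.range fun h : H => h • v1)) := by
      intro h w hw
      induction hw using Submodule.span_induction with
      | mem x hx =>
        obtain ⟨g, rfl⟩ := hx
        exact Submodule.subset_span ⟨h * g, by simp [mul_smul]⟩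
      | zero => simp only [smul_zero]; exact Submodule.zero_mem _
      | add x y _ _ hx hy => rw [smul_add]; exact Submodule.add_mem _ hx hy
      | smul c x _ hx => rw [V.semilinear]; exact Submodule.smul_mem _ _ hx
    rcases hV.2 _ hsub with hb | ht
    · exfalso
      apply hv1
      have : v1 ∈ Submodule.span K (Set.range fun h : H => h • v1) :=
        Submodule.subset_span ⟨1, one_smul H v1⟩
      rw [hb] at this
      simpa using this
    · exact ht
  haveI : FiniteDimensional K V.carrier :=
    ⟨by rw [← hspan]; exact Submodule.fg_span (Set.finite_range _)⟩
  -- the K-linear action of the kernel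
  set ρ : ↥(kerAct K H) → Module.End K V.carrier := fun h' =>
    { toFun := fun v => (h' : H) • v
      map_add' := fun a b => smul_add _ a b
      map_smul' := fun c v => by
        simp only [RingHom.id_apply]
        rw [V.semilinear, hker h' c] } with hρdef
  have hρ_apply : ∀ h' v, ρ h' v = (h' : H) • v := fun _ _ => rfl
  have hρ_comp : ∀ a b : ↥(kerAct K H), ρ a * ρ b = ρ (a * b) := by
    intro a b
    ext v
    simp only [Module.End.mul_apply, hρ_apply, Subgroup.coe_mul, mul_smul]
  have hρ_pow : ∀ (h' : ↥(kerAct K H)) (n : ℕ) (v : V.carrier),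
      ((ρ h') ^ n) v = ((h' : H) ^ n) • v := by
    intro h' n
    induction n with
    | zero => intro v; simp [one_smul]
    | succ n ihn =>
      intro v
      rw [pow_succ, pow_succ, Module.End.mul_apply, ihn, hρ_apply, mul_smul]
  have hρ_powe : ∀ h' : ↥(kerAct K H), (ρ h') ^ e = 1 := by
    intro h'
    ext v
    rw [hρ_pow]
    have h1 : h' ^ e = 1 := by rw [← hexp]; exact Monoid.pow_exponent_eq_one h'
    have h2 : ((h' : H)) ^ e = ((h' ^ e : ↥(kerAct K H)) : H) := by
      rw [SubmonoidClass.coe_pow]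
    rw [Module.End.one_apply, h2, h1]
    simp [one_smul]
  -- common eigenvector for the kernel
  obtain ⟨v₀, hv₀, hvS⟩ := aux_common_eigenvector he hζ (Set.range ρ)
    (by
      rintro - ⟨a, rfl⟩ - ⟨b, rfl⟩
      rw [hρ_comp, hρ_comp, hcomm a b])
    (by rintro - ⟨a, rfl⟩; exact hρ_powe a)
  choose c0 hc0 using fun h' : ↥(kerAct K H) => hvS (ρ h') ⟨h', rfl⟩
  have hsmul_ne : ∀ (h : H) (v : V.carrier), v ≠ 0 → h • v ≠ 0 := by
    intro h v hv h0
    apply hv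
    have : h⁻¹ • (h • v) = v := inv_smul_smul h v
    rw [h0, smul_zero] at this
    exact this.symm
  have hc0ne : ∀ h', c0 h' ≠ 0 := by
    intro h' h0
    have h1 := hc0 h'
    rw [h0, zero_smul] at h1
    exact hsmul_ne _ _ hv₀ h1
  have hc0mul : ∀ a b, c0 (a * b) = c0 a * c0 b := by
    intro a b
    have h1 : c0 (a * b) • v₀ = (c0 a * c0 b) • v₀ := by
      have h2 := hc0 (a * b)
      rw [← hρ_comp, Module.End.mul_apply, hc0 b, map_smul, hc0 a, smul_smul] at h2
      rw [← h2, mul_comm]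
    exact smul_left_injective K hv₀ h1
  set χ₀ : ↥(kerAct K H) →* Kˣ :=
    MonoidHom.mk' (fun h' => Units.mk0 (c0 h') (hc0ne h'))
      (fun a b => Units.ext (by simp [hc0mul])) with hχ₀def
  have hχ₀val : ∀ h', ((χ₀ h' : Kˣ) : K) = c0 h' := fun h' => rfl
  -- realizability of characters by cocycles
  set P : (↥(kerAct K H) →* Kˣ) → Prop := fun χ => ∃ cc : H → K, (∀ h, cc h ≠ 0) ∧
    (∀ g h, cc (g * h) = cc g * (g • cc h)) ∧
    (∀ h' : ↥(kerAct K H), cc ↑h' = ((χ h' : Kˣ) : K)) with hPdef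
  have hPmem : ∀ i, P (χs i) := by
    intro i
    haveI : Module.Finite K (Vs i).carrier := Module.finite_of_finrank_eq_succ (hVsdim i)
    haveI : Nontrivial (Vs i).carrier := Module.nontrivial_of_finrank_pos (by rw [hVsdim i]; omega)
    obtain ⟨w, hw⟩ := exists_ne (0 : (Vs i).carrier)
    have hsp : ∀ u : (Vs i).carrier, ∃ a : K, a • w = u :=
      (finrank_eq_one_iff_of_nonzero' w hw).mp (hVsdim i)
    choose cc hcc using fun h : H => hsp (h • w)
    have hwne : ∀ (h : H) (v : (Vs i).carrier), v ≠ 0 → h • v ≠ 0 := by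
      intro h v hv h0
      apply hv
      have : h⁻¹ • (h • v) = v := inv_smul_smul h v
      rw [h0, smul_zero] at this
      exact this.symm
    refine ⟨cc, ?_, ?_, ?_⟩
    · intro h h0
      have h1 := hcc h
      rw [h0, zero_smul] at h1
      exact hwne h w hw h1.symm
    · intro g h
      apply smul_left_injective K hw
      show cc (g * h) • w = (cc g * g • cc h) • w
      rw [hcc (g * h), mul_smul g h w, ← hcc h, (Vs i).semilinear, ← hcc g, smul_smul]
      rw [mul_comm]

    · intro h'
      apply smul_left_injective K hw
      show cc ↑h' • w = ((χs i h' : Kˣ) : K) • w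
      rw [hcc ↑h', hVsact i h' w]
  have hχ₀P : P χ₀ := by
    have hmemcl : χ₀ ∈ Subgroup.closure (Set.range χs) := by rw [hgen]; trivial
    refine Subgroup.closure_induction (p := fun χ _ => P χ) ?_ ?_ ?_ ?_ hmemcl
    · rintro χ ⟨i, rfl⟩
      exact hPmem i
    · exact ⟨fun _ => 1, fun _ => one_ne_zero, fun g h => by simp, fun h' => by simp⟩
    · rintro χ ψ - - ⟨c1, hc1ne, hc1coc, hc1res⟩ ⟨c2, hc2ne, hc2coc, hc2res⟩
      refine ⟨fun h => c1 h * c2 h, fun h => mul_ne_zero (hc1ne h) (hc2ne h), ?_, ?_⟩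
      · intro g h
        show c1 (g * h) * c2 (g * h) = (c1 g * c2 g) * (g • (c1 h * c2 h))
        rw [hc1coc, hc2coc, smul_mul']
        ring
      · intro h'
        show c1 ↑h' * c2 ↑h' = ((χ * ψ) h' : Kˣ).val
        rw [hc1res, hc2res]
        simp
    · rintro χ - ⟨c1, hc1ne, hc1coc, hc1res⟩
      refine ⟨fun h => (c1 h)⁻¹, fun h => inv_ne_zero (hc1ne h), ?_, ?_⟩
      · intro g h
        show (c1 (g * h))⁻¹ = (c1 g)⁻¹ * (g • (c1 h)⁻¹)
        rw [hc1coc, mul_inv, smul_inv'']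
      · intro h'
        show (c1 ↑h')⁻¹ = ((χ⁻¹ h' : Kˣ) : K)
        rw [hc1res]
        simp
  obtain ⟨cc, hccne, hcccoc, hccres⟩ := hχ₀P
  -- twisted action
  set ρ' : H → V.carrier → V.carrier := fun h v => (cc h)⁻¹ • (h • v) with hρ'def
  have hρ'mul : ∀ (g h : H) (v : V.carrier), ρ' (g * h) v = ρ' g (ρ' h v) := by
    intro g h v
    show (cc (g * h))⁻¹ • ((g * h) • v) = (cc g)⁻¹ • (g • ((cc h)⁻¹ • (h • v)))
    rw [V.semilinear g ((cc h)⁻¹) (h • v), smul_inv'' g (cc h), hcccoc g h, mul_inv,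
      mul_smul g h v, smul_smul, smul_smul]
  have hρ'smul : ∀ (h' : ↥(kerAct K H)) (a : K) (v : V.carrier),
      ρ' ↑h' (a • v) = a • ρ' ↑h' v := by
    intro h' a v
    show (cc ↑h')⁻¹ • ((h' : H) • (a • v)) = a • ((cc ↑h')⁻¹ • ((h' : H) • v))
    rw [V.semilinear, hker h' a, smul_comm]
  have hρ'add : ∀ (h : H) (a b : V.carrier), ρ' h (a + b) = ρ' h a + ρ' h b := by
    intro h a b
    show (cc h)⁻¹ • (h • (a + b)) = (cc h)⁻¹ • (h • a) + (cc h)⁻¹ • (h • b)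
    rw [smul_add, smul_add]
  have hsmul_eq : ∀ (h : H) (v : V.carrier), h • v = cc h • ρ' h v := by
    intro h v
    show h • v = cc h • ((cc h)⁻¹ • (h • v))
    rw [smul_smul, mul_inv_cancel₀ (hccne h), one_smul]
  have hv₀fix : ∀ h' : ↥(kerAct K H), ρ' ↑h' v₀ = v₀ := by
    intro h'
    show (cc ↑h')⁻¹ • ((h' : H) • v₀) = v₀
    have h1 : (h' : H) • v₀ = c0 h' • v₀ := hc0 h'
    rw [h1, hccres h', hχ₀val h', inv_smul_smul₀ (hc0ne h')]
  -- the kernel acts trivially on the twisted representation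
  set ρlin : ↥(kerAct K H) → V.carrier →ₗ[K] V.carrier := fun h' =>
    { toFun := fun v => ρ' ↑h' v
      map_add' := fun a b => hρ'add _ a b
      map_smul' := fun a v => by simp only [RingHom.id_apply]; exact hρ'smul h' a v }
    with hρlindef
  set U : Submodule K V.carrier :=
    ⨅ h' : ↥(kerAct K H), LinearMap.ker (ρlin h' - LinearMap.id) with hUdef
  have hUmem : ∀ v : V.carrier, v ∈ U ↔ ∀ h' : ↥(kerAct K H), ρ' ↑h' v = v := by
    intro v
    rw [hUdef]
    simp only [Submodule.mem_iInf, LinearMap.mem_ker, LinearMap.sub_apply, LinearMap.id_apply,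
      sub_eq_zero, hρlindef, LinearMap.coe_mk, AddHom.coe_mk]
  have hU : ∀ (v : V.carrier) (h' : ↥(kerAct K H)), ρ' ↑h' v = v := by
    have hUsub : V.IsSubrep U := by
      intro h u hu
      rw [hsmul_eq h u]
      apply U.smul_mem
      rw [hUmem]
      rw [hUmem] at hu
      intro h'
      have hconj : (h⁻¹ * ↑h' * h) ∈ kerAct K H := by
        intro a
        rw [mul_smul, mul_smul, hker h' (h • a), inv_smul_smul]
      have h2 : ρ' ↑h' (ρ' h u) =
          ρ' h (ρ' ↑(⟨h⁻¹ * ↑h' * h, hconj⟩ : ↥(kerAct K H)) u) := by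
        rw [← hρ'mul, ← hρ'mul]
        congr 1
        group
      rw [h2, hu ⟨h⁻¹ * ↑h' * h, hconj⟩]
    rcases hV.2 U hUsub with hb | ht
    · exfalso
      apply hv₀
      have hm : v₀ ∈ U := (hUmem v₀).mpr hv₀fix
      rw [hb] at hm
      simpa using hm
    · intro v h'
      have hm : v ∈ U := by rw [ht]; trivial
      exact (hUmem v).mp hm h'
  -- dimension one
  have hdim : Module.finrank K V.carrier = 1 := by
    by_cases hT : ∃ lam : K, (∑ h : H, ρ' h (lam • v₀)) ≠ 0
    · obtain ⟨lam, hu⟩ := hT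
      set u : V.carrier := ∑ h : H, ρ' h (lam • v₀) with hudef
      have hufix : ∀ g : H, ρ' g u = u := by
        intro g
        have h1 : ρ' g u = ∑ h : H, ρ' g (ρ' h (lam • v₀)) := by
          show (cc g)⁻¹ • (g • u) = _
          rw [hudef, Finset.smul_sum, Finset.smul_sum]
        rw [h1]
        have h2 : ∀ h, ρ' g (ρ' h (lam • v₀)) = ρ' (g * h) (lam • v₀) := fun h =>
          (hρ'mul g h _).symm
        simp_rw [h2]
        exact Fintype.sum_bijective (fun h => g * h) (Group.mulLeft_bijective g) _ _
          (fun h => rfl)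
      have hspan2 : V.IsSubrep (Submodule.span K {u}) := by
        intro h w hw
        induction hw using Submodule.span_induction with
        | mem x hx =>
          have hx' : x = u := by simpa using hx
          rw [hx', hsmul_eq h u, hufix h]
          exact Submodule.smul_mem _ _ (Submodule.mem_span_singleton_self u)
        | zero => simp only [smul_zero]; exact Submodule.zero_mem _
        | add x y _ _ hx hy => rw [smul_add]; exact Submodule.add_mem _ hx hy
        | smul c x _ hx => rw [V.semilinear]; exact Submodule.smul_mem _ _ hx
      rcases hV.2 _ hspan2 with hb | ht
      · exfalso
        apply hu
        have hm : u ∈ Submodule.span K {u} := Submodule.mem_span_singleton_self u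
        rw [hb] at hm
        simpa using hm
      · exact (finrank_eq_one_iff_of_nonzero u hu).mpr ht
    · exfalso
      push_neg at hT
      apply hv₀
      rw [← Module.forall_dual_apply_eq_zero_iff K v₀]
      intro φ
      set σ : H → (K →* K) := fun h => (MulSemiringAction.toRingHom H K h).toMonoidHom
        with hσdef
      have hσ_apply : ∀ (h : H) (a : K), σ h a = h • a := fun _ _ => rfl
      set b : H → K := fun h => φ (ρ' h v₀) with hbdef
      set l : (K →* K) →₀ K := ∑ h : H, Finsupp.single (σ h) (b h) with hldef
      have hl0 : Finsupp.linearCombination K (fun f : K →* K => (f : K → K)) l = 0 := by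
        rw [hldef, map_sum]
        simp_rw [Finsupp.linearCombination_single]
        funext lam
        rw [Finset.sum_apply]
        have hterm2 : ∀ h : H, ρ' h (lam • v₀) = (h • lam) • ρ' h v₀ := by
          intro h
          show (cc h)⁻¹ • (h • (lam • v₀)) = (h • lam) • ((cc h)⁻¹ • (h • v₀))
          rw [V.semilinear, smul_comm]
        have hz : (0 : K) = φ (∑ h : H, ρ' h (lam • v₀)) := by rw [hT lam, map_zero]
        rw [map_sum] at hz
        simp_rw [hterm2, map_smul, smul_eq_mul] at hz
        have hterm : ∀ h : H, (b h • (σ h : K → K)) lam = (h • lam) * b h := by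
          intro h
          rw [Pi.smul_apply, smul_eq_mul, hσ_apply, mul_comm]
        calc (∑ h : H, (b h • (σ h : K → K)) lam)
            = ∑ h : H, (h • lam) * b h := Finset.sum_congr rfl fun h _ => hterm h
          _ = 0 := hz.symm
      have hl : l = 0 := linearIndependent_iff.mp (linearIndependent_monoidHom K K) l hl0
      have hid : l (MonoidHom.id K) = 0 := by rw [hl]; rfl
      have hsum : l (MonoidHom.id K)
          = ∑ h : H, (Finsupp.single (σ h) (b h)) (MonoidHom.id K) := by
        rw [hldef]
        exact map_sum (Finsupp.applyAddHom (MonoidHom.id K)) _ _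
      have hval : ∀ h : H, (Finsupp.single (σ h) (b h)) (MonoidHom.id K)
          = if σ h = MonoidHom.id K then φ v₀ else 0 := by
        intro h
        rw [Finsupp.single_apply]
        by_cases hh : σ h = MonoidHom.id K
        · rw [if_pos hh, if_pos hh]
          have hm : h ∈ kerAct K H := fun a => by
            rw [← hσ_apply h a, hh]; rfl
          rw [hbdef]
          show φ (ρ' h v₀) = φ v₀
          rw [hU v₀ ⟨h, hm⟩]
        · rw [if_neg hh, if_neg hh]
      have hcard : (0 : K) = ((Finset.univ.filter
          fun h : H => σ h = MonoidHom.id K).card : ℕ) • φ v₀ := by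
        rw [← hid, hsum, Finset.sum_congr rfl fun h _ => hval h, ← Finset.sum_filter,
          Finset.sum_const]
      have h1mem : (1 : H) ∈ Finset.univ.filter fun h : H => σ h = MonoidHom.id K := by
        refine Finset.mem_filter.mpr ⟨Finset.mem_univ _, ?_⟩
        ext a
        rw [hσ_apply, one_smul]
        rfl
      have hcne : ((Finset.univ.filter fun h : H => σ h = MonoidHom.id K).card : K) ≠ 0 := by
        rw [Nat.cast_ne_zero]
        exact Finset.card_ne_zero_of_mem h1mem
      have := hcard
      rw [nsmul_eq_mul] at this
      rcases mul_eq_zero.mp this.symm with h0 | h0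
      · exact absurd h0 hcne
      · exact h0
  -- conclusion
  refine ⟨hdim, χ₀, ?_⟩
  intro h' v
  obtain ⟨a, rfl⟩ := (finrank_eq_one_iff_of_nonzero' v₀ hv₀).mp hdim v
  rw [V.semilinear, hker h' a, hχ₀val h']
  have h1 : (h' : H) • v₀ = c0 h' • v₀ := hc0 h'
  rw [h1, smul_smul, smul_smul, mul_comm]
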